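/- Over a mixed causal diagram G whose bidirected arcs form a disjoint union of complete graphs, every instance of the counterfactual independence schema cf-sep is an instance of d-separation in the parallel-network (counterfactual) graph: if node sets {Y_i} and {Y'_j} share no variable and have no bidirected arc between any Y_i and Y'_j in G, then in the graph obtained by severing all edges into each node Y_i and Y'_j (intervening on their parents), the sets {(Y_i)_{p_i}} and {(Y'_j)_{p'_j}} are d-separated given the empty set. -/

import Mathlib

open scoped Classical

/-- An intervention: a partial assignment of values to variables. -/
def Itv (V : Type*) (Val : V → Type*) := ∀ v, Option (Val v)

/-- A potential outcome `Y_x`: an outcome variable together with an intervention. -/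
structure PO (V : Type*) (Val : V → Type*) where
  Y : V
  x : Itv V Val

/-- A Rubin causal model (with a probability distribution on its units). -/
structure RCM (U : Type*) (V : Type*) (Val : V → Type*) where
  O : Set (PO V Val)
  F : (o : PO V Val) → U → Val o.Y
  P : U → ℝ
  P_nonneg : ∀ u, 0 ≤ P u
  P_sum : ∑ᶠ u, P u = 1

/-- Joint valuations ("counterfactuals") of a set of potential outcomes. -/
def CFVal {V : Type*} {Val : V → Type*} (O : Set (PO V Val)) :=
  (o : O) → Val o.1.Y

/-- The (pushforward) counterfactual distribution of an RCM, computed on a set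
of potential outcomes. -/
noncomputable def RCM.cfOn {U V : Type*} {Val : V → Type*} (R : RCM U V Val)
    (O : Set (PO V Val)) (g : CFVal O) : ℝ :=
  ∑ᶠ u, if ∀ o : O, R.F o.1 u = g o then R.P u else 0

/-- The counterfactual distribution of an RCM on its own defined outcomes. -/
noncomputable def RCM.cf {U V : Type*} {Val : V → Type*} (R : RCM U V Val)
    (g : CFVal R.O) : ℝ := R.cfOn R.O g

/-- Effectiveness: intervened variables take their intervened values. -/
def RCM.Effective {U V : Type*} {Val : V → Type*} (R : RCM U V Val) : Prop :=
  ∀ o, o ∈ R.O → ∀ u, ∀ y : Val o.Y, o.x o.Y = some y → R.F o u = y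

/-- Update an intervention at one variable. -/
noncomputable def upd {V : Type*} {Val : V → Type*} (x : Itv V Val) (Y : V) (y : Val Y) :
    Itv V Val :=
  fun v => if h : v = Y then some (cast (congrArg Val h.symm) y) else x v

/-- Composition, at every unit, whenever the relevant outcomes are defined. -/
def RCM.Composition {U V : Type*} {Val : V → Type*} (R : RCM U V Val) : Prop :=
  ∀ (u : U) (Y Z : V) (w : Itv V Val),
    (⟨Y, w⟩ : PO V Val) ∈ R.O → (⟨Z, w⟩ : PO V Val) ∈ R.O →
    (⟨Z, upd w Y (R.F ⟨Y, w⟩ u)⟩ : PO V Val) ∈ R.O →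
    R.F ⟨Z, upd w Y (R.F ⟨Y, w⟩ u)⟩ u = R.F ⟨Z, w⟩ u

/-- Reversibility, at every unit, whenever the relevant outcomes are defined. -/
def RCM.Reversibility {U V : Type*} {Val : V → Type*} (R : RCM U V Val) : Prop :=
  ∀ (u : U) (Y Z : V) (w : Itv V Val) (y : Val Y) (z : Val Z), Y ≠ Z →
    (⟨Y, upd w Z z⟩ : PO V Val) ∈ R.O → (⟨Z, upd w Y y⟩ : PO V Val) ∈ R.O →
    (⟨Y, w⟩ : PO V Val) ∈ R.O →
    R.F ⟨Y, upd w Z z⟩ u = y → R.F ⟨Z, upd w Y y⟩ u = z →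
    R.F ⟨Y, w⟩ u = y

/-- A structural causal model. -/
structure SCM (Uex : Type*) (V : Type*) (Val : V → Type*) where
  Pa : V → Set V
  Pa_irr : ∀ v, v ∉ Pa v
  f : (v : V) → ((w : V) → Val w) → Uex → Val v
  f_dep : ∀ v a b u, (∀ w ∈ Pa v, a w = b w) → f v a u = f v b u
  P : Uex → ℝ
  P_nonneg : ∀ u, 0 ≤ P u
  P_sum : ∑ᶠ u, P u = 1

/-- `s` solves the manipulated model `M_x` under exogenous setting `u`. -/
def SCM.IsSol {Uex V : Type*} {Val : V → Type*} (M : SCM Uex V Val)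
    (x : Itv V Val) (u : Uex) (s : ∀ w, Val w) : Prop :=
  ∀ w, s w = (x w).getD (M.f w s u)

/-- `M` has a unique solution under every intervention and exogenous setting. -/
def SCM.Uniq {Uex V : Type*} {Val : V → Type*} (M : SCM Uex V Val) : Prop :=
  ∀ (x : Itv V Val) (u : Uex), ∃! s, M.IsSol x u s

/-- The potential outcome `Y_x(u)` of an SCM with unique solutions. -/
noncomputable def SCM.po {Uex V : Type*} {Val : V → Type*} (M : SCM Uex V Val)
    (h : M.Uniq) (o : PO V Val) (u : Uex) : Val o.Y :=
  (h o.x u).exists.choose o.Y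

/-- The counterfactual distribution of an SCM on a set of potential outcomes. -/
noncomputable def SCM.cf {Uex V : Type*} {Val : V → Type*} (M : SCM Uex V Val)
    (h : M.Uniq) (O : Set (PO V Val)) (g : CFVal O) : ℝ :=
  ∑ᶠ u, if ∀ o : O, M.po h o.1 u = g o then M.P u else 0

/-- `M` represents `R`: the counterfactual distribution of `M` marginalizes to
that of `R` on the outcomes defined by `R`. -/
def Represents {Uex U V : Type*} {Val : V → Type*} (M : SCM Uex V Val) (h : M.Uniq)
    (R : RCM U V Val) : Prop :=
  ∀ g : CFVal R.O, M.cf h R.O g = R.cf g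

/-- `R` is representable by some SCM with unique solutions. -/
def RCM.Representable {U V : Type*} {Val : V → Type*} (R : RCM U V Val) : Prop :=
  ∃ (Uex : Type) (M : SCM Uex V Val) (h : M.Uniq), Finite Uex ∧ Represents M h R

/-- `R'` extends `R`. -/
def RCM.Extends {U V : Type*} {Val : V → Type*} (R' R : RCM U V Val) : Prop :=
  R.O ⊆ R'.O ∧ (∀ o ∈ R.O, R'.F o = R.F o) ∧ R'.P = R.P

/-- A full RCM defines every potential outcome. -/
def RCM.Full {U V : Type*} {Val : V → Type*} (R : RCM U V Val) : Prop :=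
  R.O = Set.univ

/-- `R'` is a submodel of `R`. -/
def Submodel {U V : Type*} {Val : V → Type*} (R' R : RCM U V Val) : Prop :=
  R'.O ⊆ R.O ∧ (∀ o ∈ R'.O, R'.F o = R.F o) ∧ R'.P = R.P

/-- A d-connecting walk given conditioning set `Z`: consecutive nodes are
adjacent, every interior collider has a descendant in `Z`, and every interior
non-collider is outside `Z`. -/
def IsDConnWalk {N : Type*} (edge : N → N → Prop) (Z : Set N) (p : List N) : Prop :=
  List.Chain' (fun a b => edge a b ∨ edge b a) p ∧
  ∀ i : ℕ, ∀ h0 : 0 < i, ∀ h2 : i + 1 < p.length,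
    ((edge (p.get ⟨i - 1, by omega⟩) (p.get ⟨i, by omega⟩) ∧
        edge (p.get ⟨i + 1, h2⟩) (p.get ⟨i, by omega⟩)) →
      ∃ d ∈ Z, Relation.ReflTransGen edge (p.get ⟨i, by omega⟩) d) ∧
    (¬(edge (p.get ⟨i - 1, by omega⟩) (p.get ⟨i, by omega⟩) ∧
        edge (p.get ⟨i + 1, h2⟩) (p.get ⟨i, by omega⟩)) →
      p.get ⟨i, by omega⟩ ∉ Z)

/-- `A` and `B` are d-separated given `Z`. -/
def DSeparated {N : Type*} (edge : N → N → Prop) (A B Z : Set N) : Prop :=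
  ¬ ∃ p : List N, IsDConnWalk edge Z p ∧
      (∃ a ∈ A, p.head? = some a) ∧ (∃ b ∈ B, p.getLast? = some b)

/-- A clique of the bidirected relation `B`. -/
def IsClique {V : Type*} (B : V → V → Prop) (c : Set V) : Prop :=
  ∀ a ∈ c, ∀ b ∈ c, a ≠ b → B a b

/-- A maximal clique of the bidirected relation `B`. -/
def IsMaxClique {V : Type*} (B : V → V → Prop) (c : Set V) : Prop :=
  IsClique B c ∧ ∀ d, IsClique B d → c ⊆ d → d = c

/-- The nodes of the parallel-network (counterfactual) graph: one copy of each
variable per potential outcome `(Y_i)_{p_i}`, `(Y'_j)_{p'_j}` (indexed by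
`I ⊕ J`), together with one shared latent node per maximal bidirected clique. -/
def CFNode (V : Type*) (I J : Type*) (B : V → V → Prop) : Type _ :=
  ((I ⊕ J) × V) ⊕ {c : Set V // IsMaxClique B c}

/-- Edges of the parallel-network graph: within the copy associated with a
target node the parents of the target are fixed (hence removed), and each
latent clique node points into all of its surviving members across all
copies. -/
def cfEdge {V I J : Type*} (E B : V → V → Prop) (Yi : I → V) (Yj : J → V) :
    CFNode V I J B → CFNode V I J B → Prop :=
  fun n m =>
    match n, m with
    | Sum.inl (k, a), Sum.inl (k', b) =>
        k = k' ∧ E a b ∧ ¬ E a (Sum.elim Yi Yj k) ∧ ¬ E b (Sum.elim Yi Yj k')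
    | Sum.inr c, Sum.inl (k, b) => b ∈ c.1 ∧ ¬ E b (Sum.elim Yi Yj k)
    | _, _ => False

/-- Over a mixed diagram whose bidirected arcs form a disjoint union of
complete graphs, every instance of the counterfactual independence schema is
an instance of d-separation: if the `Y_i` and the `Y'_j` share no variable and
have no bidirected arc between them, then in the parallel-network graph (with
edges into each `Y_i`, `Y'_j` severed by intervening on its parents) the two
families of copies are d-separated given the empty set. -/
theorem stmt19 {V I J : Type} (E B : V → V → Prop)
    (hDag : ∀ v, ¬ Relation.TransGen E v v)
    (hBsymm : ∀ a b, B a b → B b a) (hBirr : ∀ a, ¬ B a a)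
    (hBunion : ∀ a b c, B a b → B b c → a ≠ c → B a c)
    (Yi : I → V) (Yj : J → V)
    (hVar : ∀ i j, Yi i ≠ Yj j)
    (hNoBi : ∀ i j, ¬ B (Yi i) (Yj j)) :
    DSeparated (cfEdge E B Yi Yj)
      {n | ∃ i, n = Sum.inl (Sum.inl i, Yi i)}
      {n | ∃ j, n = Sum.inl (Sum.inr j, Yj j)}
      (∅ : Set (CFNode V I J B)) := by
  rintro ⟨p, ⟨hchain, hint⟩, ⟨a, ⟨i, rfl⟩, hhead⟩, ⟨b, ⟨j, rfl⟩, hlast⟩⟩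
  classical
  set Ed := cfEdge E B Yi Yj with hEdDef
  have hp : p ≠ [] := by rintro rfl; simp at hhead
  set d : CFNode V I J B := Sum.inl (Sum.inl i, Yi i) with hd
  set f : ℕ → CFNode V I J B := fun t => p.getD t d with hfdef
  have hf : ∀ (t : ℕ) (h : t < p.length), p.get ⟨t, h⟩ = f t := by
    intro t h
    rw [hfdef]
    exact (List.getD_eq_getElem p d h).symm
  have h0 : f 0 = Sum.inl (Sum.inl i, Yi i) := by
    cases p with
    | nil => exact absurd rfl hp
    | cons x q =>
      simp only [List.head?_cons, Option.some.injEq] at hhead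
      simp [hfdef, hhead]
      exact hd
  have hlastlen : f (p.length - 1) = Sum.inl (Sum.inr j, Yj j) := by
    rw [List.getLast?_eq_getElem?] at hlast
    have hl : p.length - 1 < p.length := by
      have : 0 < p.length := List.length_pos_iff.mpr hp
      omega
    rw [List.getElem?_eq_getElem hl] at hlast
    have hlast := Option.some.inj hlast
    rw [hfdef]
    exact (List.getD_eq_getElem p d hl).trans hlast
  have hlen : 2 ≤ p.length := by
    by_contra h
    have h1 : p.length = 1 := by
      have : 0 < p.length := List.length_pos_iff.mpr hp
      omega
    rw [h1] at hlastlen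
    simp only [h0] at hlastlen
    injection hlastlen with h'
    injection h' with h1 h2
    exact hVar i j h2
  -- chain in function form
  have hcg : ∀ t, t + 1 < p.length → Ed (f t) (f (t + 1)) ∨ Ed (f (t + 1)) (f t) := by
    intro t ht
    have := List.isChain_iff_getElem.mp hchain t (by omega)
    rw [← hf t (by omega), ← hf (t + 1) (by omega)]; exact this
  -- no colliders: forward edges propagate
  have hnc : ∀ t, t + 2 < p.length → Ed (f t) (f (t + 1)) → Ed (f (t + 1)) (f (t + 2)) := by
    intro t ht hfw
    rcases hcg (t + 1) (by omega) with h1 | h1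
    · exact h1
    · exfalso
      have h3 := (hint (t + 1) (by omega) (by omega : t + 1 + 1 < p.length)).1
      simp only [hf, Nat.add_sub_cancel] at h3
      obtain ⟨z, hz, -⟩ := h3 ⟨hfw, h1⟩
      exact Set.notMem_empty z hz
  have fwd : ∀ s, Ed (f s) (f (s + 1)) → ∀ t, s ≤ t → t + 1 < p.length →
      Ed (f t) (f (t + 1)) := by
    intro s hes t hst
    induction t, hst using Nat.le_induction with
    | base => intro _; exact hes
    | succ t ht ih => intro h2; exact hnc t h2 (ih (by omega))
  -- edge shape lemmas
  have intoA : ∀ (m : I) (x : CFNode V I J B), Ed x (Sum.inl (Sum.inl m, Yi m)) →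
      ∃ c : {c : Set V // IsMaxClique B c}, x = Sum.inr c ∧ Yi m ∈ c.1 := by
    intro m x h
    match x with
    | Sum.inl (k, a) =>
      obtain ⟨rfl, h1, h2, h3⟩ := h
      exact absurd h1 h2
    | Sum.inr c => exact ⟨c, rfl, h.1⟩
  have intoB : ∀ (m : J) (x : CFNode V I J B), Ed x (Sum.inl (Sum.inr m, Yj m)) →
      ∃ c : {c : Set V // IsMaxClique B c}, x = Sum.inr c ∧ Yj m ∈ c.1 := by
    intro m x h
    match x with
    | Sum.inl (k, a) =>
      obtain ⟨rfl, h1, h2, h3⟩ := h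
      exact absurd h1 h2
    | Sum.inr c => exact ⟨c, rfl, h.1⟩
  have intoLatent : ∀ (x : CFNode V I J B) c, ¬ Ed x (Sum.inr c) := by
    intro x c h
    match x with
    | Sum.inl _ => exact h
    | Sum.inr _ => exact h
  have fromNode : ∀ (x y : CFNode V I J B), Ed x y → ∃ k v, y = Sum.inl (k, v) := by
    intro x y h
    match x, y with
    | Sum.inl _, Sum.inl (k, v) => exact ⟨k, v, rfl⟩
    | Sum.inr _, Sum.inl (k, v) => exact ⟨k, v, rfl⟩
    | Sum.inl _, Sum.inr _ => exact h.elim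
    | Sum.inr _, Sum.inr _ => exact h.elim
  -- main case split on the first step
  rcases hcg 0 (by omega) with hc0 | hc0
  · -- all edges forward; all nodes are variable copies; the edge into B is impossible
    have allInl : ∀ t, t < p.length → ∃ k v, f t = Sum.inl (k, v) := by
      intro t
      induction t with
      | zero => intro _; exact ⟨_, _, h0⟩
      | succ t ih =>
        intro ht
        exact fromNode _ _ (fwd 0 hc0 t (by omega) ht)
    have hlastE : Ed (f (p.length - 2)) (f (p.length - 1)) := by
      have := fwd 0 hc0 (p.length - 2) (by omega) (by omega)
      have e : p.length - 2 + 1 = p.length - 1 := by omega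
      rwa [e] at this
    rw [hlastlen] at hlastE
    obtain ⟨c, hc, -⟩ := intoB j _ hlastE
    obtain ⟨k, v, hkv⟩ := allInl (p.length - 2) (by omega)
    rw [hkv] at hc
    exact Sum.inl_ne_inr hc
  · -- first step backward: f 1 is a latent clique node
    rw [h0] at hc0
    obtain ⟨c, hc1, hcYi⟩ := intoA i _ hc0
    have hlen3 : 3 ≤ p.length := by
      by_contra h
      have h2 : p.length = 2 := by omega
      rw [h2] at hlastlen
      rw [show (2 : ℕ) - 1 = 1 from rfl, hc1] at hlastlen
      exact Sum.inr_ne_inl hlastlen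
    have hstep1 : Ed (f 1) (f 2) := by
      rcases hcg 1 (by omega) with h1 | h1
      · exact h1
      · rw [hc1] at h1
        exact absurd h1 (intoLatent _ _)
    have allInl2 : ∀ t, 2 ≤ t → t < p.length → ∃ k v, f t = Sum.inl (k, v) := by
      intro t h2t
      induction t, h2t using Nat.le_induction with
      | base => intro _; exact fromNode _ _ hstep1
      | succ t ht ih =>
        intro hlt
        exact fromNode _ _ (fwd 1 hstep1 t (by omega) hlt)
    have hlastE : Ed (f (p.length - 2)) (f (p.length - 1)) := by
      have := fwd 1 hstep1 (p.length - 2) (by omega) (by omega)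
      have e : p.length - 2 + 1 = p.length - 1 := by omega
      rwa [e] at this
    rw [hlastlen] at hlastE
    obtain ⟨c', hc', hcYj⟩ := intoB j _ hlastE
    rcases Nat.lt_or_ge (p.length) 4 with h4 | h4
    · -- length = 3 : the middle latent contains both Yi i and Yj j
      have h3 : p.length = 3 := by omega
      rw [h3] at hc'
      rw [show (3 : ℕ) - 2 = 1 from rfl, hc1] at hc'
      have hcc : c = c' := Sum.inr_injective hc'
      subst hcc
      exact hNoBi i j (c.2.1 (Yi i) hcYi (Yj j) hcYj (hVar i j))
    · obtain ⟨k, v, hkv⟩ := allInl2 (p.length - 2) (by omega) (by omega)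
      rw [hkv] at hc'
      exact Sum.inl_ne_inr hc'
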